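/- For every ε > 0 there exists N₀ such that for all integers n ≥ N₀ and all 1 ≤ k ≤ n/2, the expanding constant of the generalised Petersen graph satisfies h(P(n,k)) < ε. That is, h(P(n,k)) → 0 as n → ∞, uniformly in k, so the generalised Petersen graphs do not form a family of expanders. -/

import Mathlib

open scoped Classical

/-- The generalised Petersen graph `P(n,k)` on vertex set `ZMod n × Bool`:
`(i, false)` is the outer vertex `a i`, `(i, true)` is the inner vertex `b i`;
edges are `a i a (i+1)`, `a i b i` and `b i b (i+k)` (indices mod `n`). -/
def petersen (n k : ℕ) : SimpleGraph (ZMod n × Bool) :=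
  SimpleGraph.fromRel fun v w =>
    (v.2 = false ∧ w.2 = false ∧ w.1 = v.1 + 1) ∨
    (v.2 = false ∧ w.2 = true ∧ w.1 = v.1) ∨
    (v.2 = true ∧ w.2 = true ∧ w.1 = v.1 + (k : ZMod n))

/-- The number of edges of `G` with exactly one endpoint in `F`. -/
noncomputable def edgeBoundary {V : Type*} (G : SimpleGraph V) (F : Finset V) : ℕ :=
  Set.ncard {e : Sym2 V | e ∈ G.edgeSet ∧ ∃ v w, e = s(v, w) ∧ v ∈ F ∧ w ∉ F}

/-- The expanding (Cheeger) constant of a finite graph: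
`h(G) = min { |∂F| / |F| : F ⊆ V, F ≠ ∅, |F| ≤ |V| / 2 }`. -/
noncomputable def expandingConstant {V : Type*} [Fintype V] (G : SimpleGraph V) : ℝ :=
  ⨅ F : {F : Finset V // F.Nonempty ∧ 2 * F.card ≤ Fintype.card V},
    (edgeBoundary G F.1 : ℝ) / (F.1.card : ℝ)

namespace PetersenAux

/-- Ball-like sets: indices reachable as `x + y k` with `|x|, |y| ≤ ρ`. -/
noncomputable def A (n k ρ : ℕ) : Finset (ZMod n) :=
  ((Finset.Icc (-(ρ:ℤ)) ρ) ×ˢ (Finset.Icc (-(ρ:ℤ)) ρ)).image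
    (fun p => (p.1 : ZMod n) + (p.2 : ZMod n) * (k : ZMod n))

lemma card_A_le (n k ρ : ℕ) : (A n k ρ).card ≤ (2*ρ+1)^2 := by
  refine Finset.card_image_le.trans ?_
  rw [Finset.card_product, Int.card_Icc]
  have : ((ρ:ℤ) + 1 - -(ρ:ℤ)).toNat = 2*ρ+1 := by omega
  rw [this]; ring_nf; omega

lemma zero_mem_A (n k ρ : ℕ) : (0 : ZMod n) ∈ A n k ρ := by
  refine Finset.mem_image.2 ⟨(0, 0), ?_, by simp⟩
  simp [Finset.mem_product]

lemma card_A_zero (n k : ℕ) : (A n k 0).card = 1 := by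
  have : A n k 0 = {0} := by
    apply Finset.eq_singleton_iff_unique_mem.2
    refine ⟨zero_mem_A n k 0, ?_⟩
    intro x hx
    obtain ⟨⟨a, b⟩, hab, rfl⟩ := Finset.mem_image.1 hx
    simp only [Finset.mem_product, Nat.cast_zero, Finset.mem_Icc] at hab
    have ha : a = 0 := by omega
    have hb : b = 0 := by omega
    simp [ha, hb]
  rw [this, Finset.card_singleton]

lemma A_mono (n k ρ : ℕ) : A n k ρ ⊆ A n k (ρ+1) := by
  intro x hx
  obtain ⟨⟨a, b⟩, hab, rfl⟩ := Finset.mem_image.1 hx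
  simp only [Finset.mem_product, Finset.mem_Icc] at hab
  refine Finset.mem_image.2 ⟨(a, b), ?_, rfl⟩
  simp only [Finset.mem_product, Finset.mem_Icc]
  push_cast; omega

lemma step_mem_A {n k ρ : ℕ} {i j : ZMod n}
    (hi : i ∈ A n k ρ)
    (hj : j = i ∨ j = i + 1 ∨ j = i - 1 ∨ j = i + (k : ZMod n) ∨ j = i - (k : ZMod n)) :
    j ∈ A n k (ρ+1) := by
  obtain ⟨⟨a, b⟩, hab, rfl⟩ := Finset.mem_image.1 hi
  simp only [Finset.mem_product, Finset.mem_Icc] at hab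
  rcases hj with rfl | rfl | rfl | rfl | rfl
  · exact A_mono n k ρ hi
  · refine Finset.mem_image.2 ⟨(a+1, b), ?_, by push_cast; ring⟩
    simp only [Finset.mem_product, Finset.mem_Icc]; push_cast; omega
  · refine Finset.mem_image.2 ⟨(a-1, b), ?_, by push_cast; ring⟩
    simp only [Finset.mem_product, Finset.mem_Icc]; push_cast; omega
  · refine Finset.mem_image.2 ⟨(a, b+1), ?_, by push_cast; ring⟩
    simp only [Finset.mem_product, Finset.mem_Icc]; push_cast; omega
  · refine Finset.mem_image.2 ⟨(a, b-1), ?_, by push_cast; ring⟩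
    simp only [Finset.mem_product, Finset.mem_Icc]; push_cast; omega

lemma exists_R {δ : ℝ} (hδ : 0 < δ) : ∃ R : ℕ, 1 ≤ R ∧ ((2*R+1 : ℕ) : ℝ)^2 < (1+δ)^R := by
  have h1 : (0:ℝ) ≤ 1/(1+δ) := by positivity
  have h2 : 1/(1+δ) < 1 := by
    rw [div_lt_one (by linarith)]; linarith
  have := tendsto_pow_const_mul_const_pow_of_lt_one 2 h1 h2
  have h3 := (this.eventually (gt_mem_nhds (by norm_num : (0:ℝ) < 1/9)))
  rw [Filter.eventually_atTop] at h3
  obtain ⟨R₀, hR₀⟩ := h3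
  refine ⟨max R₀ 1, le_max_right _ _, ?_⟩
  set R := max R₀ 1 with hRdef
  have hR1 : 1 ≤ R := le_max_right _ _
  have hkey : (R:ℝ)^2 * (1/(1+δ))^R < 1/9 := hR₀ R (le_max_left _ _)
  have hpow : (0:ℝ) < (1+δ)^R := by positivity
  have hRpos : (0:ℝ) < (R:ℝ) := by exact_mod_cast hR1
  have hR1' : (1:ℝ) ≤ (R:ℝ) := by exact_mod_cast hR1
  have h4 : ((2*R+1 : ℕ) : ℝ) ≤ 3 * R := by
    push_cast; linarith
  have h5 : ((2*R+1 : ℕ) : ℝ)^2 ≤ 9 * (R:ℝ)^2 := by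
    have : ((2*R+1 : ℕ) : ℝ)^2 ≤ (3*(R:ℝ))^2 := by
      apply pow_le_pow_left₀ (by positivity) h4
    nlinarith
  have hinv : (1/(1+δ))^R = ((1+δ)^R)⁻¹ := by rw [one_div, inv_pow]
  rw [hinv] at hkey
  have h6 : (R:ℝ)^2 < (1/9) * (1+δ)^R := by
    have hmul := mul_lt_mul_of_pos_right hkey hpow
    rw [mul_assoc, inv_mul_cancel₀ hpow.ne', mul_one] at hmul
    linarith
  linarith

end PetersenAux

open PetersenAux in
/-- The expanding constants of the generalised Petersen graphs tend to `0`
as `n → ∞`, uniformly in `k`: for every `ε > 0` there is `N₀` such that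
`h(P(n,k)) < ε` whenever `n ≥ N₀` and `1 ≤ k ≤ n/2`. Hence the generalised
Petersen graphs do not form a family of expanders. -/
theorem petersen_not_expanders (ε : ℝ) (hε : 0 < ε) :
    ∃ N₀ : ℕ, ∀ (n : ℕ) [NeZero n], ∀ k : ℕ, N₀ ≤ n → 1 ≤ k → 2 * k ≤ n →
      expandingConstant (petersen n k) < ε := by
  set δ := ε/5 with hδdef
  have hδ : 0 < δ := by positivity
  obtain ⟨R, hR1, hR⟩ := exists_R hδ
  refine ⟨2*(2*R+1)^2, ?_⟩
  intro n _ k hn hk1 hk2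
  -- find a slow-growth radius
  have hslow : ∃ ρ < R, ((A n k (ρ+1)).card : ℝ) < (1+δ) * ((A n k ρ).card : ℝ) := by
    by_contra hcon
    push_neg at hcon
    have key : ∀ ρ, ρ ≤ R → (1+δ)^ρ ≤ ((A n k ρ).card : ℝ) := by
      intro ρ
      induction ρ with
      | zero => intro _; simp [card_A_zero]
      | succ ρ ih =>
        intro hρ
        have h1 := ih (by omega)
        have h2 := hcon ρ (by omega)
        calc (1+δ)^(ρ+1) = (1+δ)^ρ * (1+δ) := by ring
          _ ≤ ((A n k ρ).card : ℝ) * (1+δ) := by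
              apply mul_le_mul_of_nonneg_right (h1) (by linarith)
          _ = (1+δ) * ((A n k ρ).card : ℝ) := by ring
          _ ≤ ((A n k (ρ+1)).card : ℝ) := h2
    have h1 := key R le_rfl
    have h2 : ((A n k R).card : ℝ) ≤ ((2*R+1 : ℕ) : ℝ)^2 := by
      exact_mod_cast card_A_le n k R
    linarith
  obtain ⟨ρ, hρR, hslowρ⟩ := hslow
  set I : Finset (ZMod n) := A n k ρ with hIdef
  set F : Finset (ZMod n × Bool) := I ×ˢ Finset.univ with hFdef
  have hmemF : ∀ v : ZMod n × Bool, v ∈ F ↔ v.1 ∈ I := by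
    intro v; simp [hFdef, Finset.mem_product]
  have hF1 : F.Nonempty := ⟨(0, false), (hmemF _).2 (zero_mem_A n k ρ)⟩
  have hIpos : 0 < I.card := Finset.card_pos.2 ⟨0, zero_mem_A n k ρ⟩
  have hcardF : F.card = I.card * 2 := by
    rw [hFdef, Finset.card_product, Finset.card_univ, Fintype.card_bool]
  have hIle : I.card ≤ (2*R+1)^2 := by
    refine (card_A_le n k ρ).trans ?_
    have : 2*ρ+1 ≤ 2*R+1 := by omega
    exact Nat.pow_le_pow_left this 2
  have hside : F.Nonempty ∧ 2 * F.card ≤ Fintype.card (ZMod n × Bool) := by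
    refine ⟨hF1, ?_⟩
    rw [Fintype.card_prod, ZMod.card, Fintype.card_bool, hcardF]
    omega
  -- the boundary bound
  set A' : Finset (ZMod n) := A n k (ρ+1) \ I with hA'def
  have hA'card : (A'.card : ℝ) < δ * I.card := by
    have hsub : I ⊆ A n k (ρ+1) := A_mono n k ρ
    have h1 : A'.card = (A n k (ρ+1)).card - I.card := Finset.card_sdiff_of_subset hsub
    have h2 : I.card ≤ (A n k (ρ+1)).card := Finset.card_le_card hsub
    have h3 : (A'.card : ℝ) = ((A n k (ρ+1)).card : ℝ) - (I.card : ℝ) := by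
      rw [h1]; push_cast [h2]; ring
    rw [h3]; linarith
  -- neighbour finset
  set nbrs : ZMod n × Bool → Finset (ZMod n × Bool) := fun w =>
    {(w.1+1, false), (w.1-1, false), (w.1, !w.2), (w.1+(k : ZMod n), true),
      (w.1-(k : ZMod n), true)} with hnbrs
  set U : Finset ((ZMod n × Bool) × (ZMod n × Bool)) :=
    (A' ×ˢ (Finset.univ : Finset Bool)).biUnion
      (fun w => (nbrs w).image (fun v => (v, w))) with hUdef
  have hUcard : U.card ≤ 10 * A'.card := by
    refine (Finset.card_biUnion_le).trans ?_
    have hb : ∀ w ∈ A' ×ˢ (Finset.univ : Finset Bool),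
        ((nbrs w).image (fun v => (v, w))).card ≤ 5 := by
      intro w _
      refine Finset.card_image_le.trans ?_
      rw [hnbrs]
      refine (Finset.card_insert_le _ _).trans ?_
      refine Nat.succ_le_succ ?_
      refine (Finset.card_insert_le _ _).trans ?_
      refine Nat.succ_le_succ ?_
      refine (Finset.card_insert_le _ _).trans ?_
      refine Nat.succ_le_succ ?_
      refine (Finset.card_insert_le _ _).trans ?_
      exact Nat.succ_le_succ (Finset.card_singleton _).le
    calc ∑ w ∈ A' ×ˢ (Finset.univ : Finset Bool),
          ((nbrs w).image (fun v => (v, w))).card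
        ≤ ∑ _w ∈ A' ×ˢ (Finset.univ : Finset Bool), 5 := Finset.sum_le_sum hb
      _ = (A' ×ˢ (Finset.univ : Finset Bool)).card * 5 := by
          rw [Finset.sum_const, smul_eq_mul]
      _ = 10 * A'.card := by
          rw [Finset.card_product, Finset.card_univ, Fintype.card_bool]; ring
  have hbd : edgeBoundary (petersen n k) F ≤ 10 * A'.card := by
    rw [edgeBoundary]
    set S : Set (Sym2 (ZMod n × Bool)) :=
      {e | e ∈ (petersen n k).edgeSet ∧ ∃ v w, e = s(v, w) ∧ v ∈ F ∧ w ∉ F} with hSdef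
    have hne : Nonempty ((ZMod n × Bool) × (ZMod n × Bool)) := ⟨((0, false), (0, false))⟩
    set f : Sym2 (ZMod n × Bool) → (ZMod n × Bool) × (ZMod n × Bool) := fun e =>
      if h : ∃ p : (ZMod n × Bool) × (ZMod n × Bool),
          e = s(p.1, p.2) ∧ p.1 ∈ F ∧ p.2 ∉ F then h.choose
      else ((0, false), (0, false)) with hfdef
    have hfs : ∀ e ∈ S, ∃ h : (∃ p : (ZMod n × Bool) × (ZMod n × Bool),
        e = s(p.1, p.2) ∧ p.1 ∈ F ∧ p.2 ∉ F), f e = h.choose := by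
      intro e he
      obtain ⟨_, v, w, hew, hv, hw⟩ := he
      have h : ∃ p : (ZMod n × Bool) × (ZMod n × Bool),
          e = s(p.1, p.2) ∧ p.1 ∈ F ∧ p.2 ∉ F := ⟨(v, w), hew, hv, hw⟩
      exact ⟨h, dif_pos h⟩
    have hmaps : ∀ e ∈ S, f e ∈ (U : Set ((ZMod n × Bool) × (ZMod n × Bool))) := by
      intro e he
      obtain ⟨h, hfe⟩ := hfs e he
      obtain ⟨hes, hv, hw⟩ := h.choose_spec
      set v := h.choose.1 with hvd
      set w := h.choose.2 with hwd
      have hadj : (petersen n k).Adj v w := by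
        have := he.1
        rw [hes, SimpleGraph.mem_edgeSet] at this
        exact this
      rw [petersen, SimpleGraph.fromRel_adj] at hadj
      obtain ⟨hne', hrel⟩ := hadj
      have hvI : v.1 ∈ I := (hmemF v).1 hv
      have hwI : w.1 ∉ I := fun hh => hw ((hmemF w).2 hh)
      -- w.1 ∈ A n k (ρ+1), and v ∈ nbrs w
      have hmain : w.1 ∈ A n k (ρ+1) ∧ v ∈ nbrs w := by
        rcases hrel with (⟨h1, h2, h3⟩ | ⟨h1, h2, h3⟩ | ⟨h1, h2, h3⟩) |
          (⟨h1, h2, h3⟩ | ⟨h1, h2, h3⟩ | ⟨h1, h2, h3⟩)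
        · -- v outer, w = v+1 outer : v = (w.1 - 1, false)
          refine ⟨step_mem_A hvI (Or.inr (Or.inl h3)), ?_⟩
          have hv1 : v.1 = w.1 - 1 := by rw [h3]; ring
          rw [hnbrs]
          simp only [Finset.mem_insert, Finset.mem_singleton]
          right; left
          exact Prod.ext hv1 h1
        · -- v outer, w inner, w.1 = v.1 : v = (w.1, !w.2)
          refine ⟨step_mem_A hvI (Or.inl h3), ?_⟩
          rw [hnbrs]
          simp only [Finset.mem_insert, Finset.mem_singleton]
          right; right; left
          refine Prod.ext h3.symm ?_
          rw [h1, h2]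
          rfl
        · -- v inner, w = v + k inner : v = (w.1 - k, true)
          refine ⟨step_mem_A hvI (Or.inr (Or.inr (Or.inr (Or.inl h3)))), ?_⟩
          have hv1 : v.1 = w.1 - (k : ZMod n) := by rw [h3]; ring
          rw [hnbrs]
          simp only [Finset.mem_insert, Finset.mem_singleton]
          right; right; right; right
          exact Prod.ext hv1 h1
        · -- rel w v : w outer, v = w+1 outer : v = (w.1+1, false)
          refine ⟨?_, ?_⟩
          · have : w.1 = v.1 - 1 := by rw [h3]; ring
            exact step_mem_A hvI (Or.inr (Or.inr (Or.inl this)))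
          · rw [hnbrs]
            simp only [Finset.mem_insert, Finset.mem_singleton]
            left
            exact Prod.ext h3 h2
        · -- rel w v : w outer, v inner, v.1 = w.1 : v = (w.1, !w.2)
          refine ⟨step_mem_A hvI (Or.inl h3.symm), ?_⟩
          rw [hnbrs]
          simp only [Finset.mem_insert, Finset.mem_singleton]
          right; right; left
          refine Prod.ext h3 ?_
          rw [h1, h2]
          rfl
        · -- rel w v : w inner, v = w + k inner : v = (w.1 + k, true)
          refine ⟨?_, ?_⟩
          · have : w.1 = v.1 - (k : ZMod n) := by rw [h3]; ring
            exact step_mem_A hvI (Or.inr (Or.inr (Or.inr (Or.inr this))))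
          · rw [hnbrs]
            simp only [Finset.mem_insert, Finset.mem_singleton]
            right; right; right; left
            exact Prod.ext h3 h2
      rw [hfe]
      have hwA' : w ∈ A' ×ˢ (Finset.univ : Finset Bool) := by
        rw [Finset.mem_product]
        exact ⟨Finset.mem_sdiff.2 ⟨hmain.1, hwI⟩, Finset.mem_univ _⟩
      have : (v, w) ∈ U := by
        rw [hUdef]
        exact Finset.mem_biUnion.2 ⟨w, hwA',
          Finset.mem_image.2 ⟨v, hmain.2, rfl⟩⟩
      simpa using this
    have hinj : Set.InjOn f S := by
      intro e1 he1 e2 he2 hfe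
      obtain ⟨h1, hf1⟩ := hfs e1 he1
      obtain ⟨h2, hf2⟩ := hfs e2 he2
      have s1 := h1.choose_spec.1
      have s2 := h2.choose_spec.1
      rw [s1, s2]
      rw [hf1, hf2] at hfe
      rw [hfe]
    have h := Set.ncard_le_ncard_of_injOn f hmaps hinj (Set.toFinite _)
    rw [Set.ncard_coe_finset] at h
    exact h.trans hUcard
  -- conclude
  have hbddBelow : BddBelow (Set.range fun F : {F : Finset (ZMod n × Bool) //
      F.Nonempty ∧ 2 * F.card ≤ Fintype.card (ZMod n × Bool)} =>
      (edgeBoundary (petersen n k) F.1 : ℝ) / (F.1.card : ℝ)) := by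
    refine ⟨0, ?_⟩
    rintro x ⟨G, rfl⟩
    positivity
  have hle : expandingConstant (petersen n k) ≤
      (edgeBoundary (petersen n k) F : ℝ) / (F.card : ℝ) :=
    ciInf_le hbddBelow ⟨F, hside⟩
  refine hle.trans_lt ?_
  rw [div_lt_iff₀ (by exact_mod_cast Nat.pos_of_ne_zero (by
    intro hh; rw [hcardF] at hh; omega))]
  have hb : (edgeBoundary (petersen n k) F : ℝ) ≤ 10 * (A'.card : ℝ) := by
    exact_mod_cast Nat.cast_le.2 hbd
  have hF2 : (F.card : ℝ) = 2 * (I.card : ℝ) := by rw [hcardF]; push_cast; ring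
  calc (edgeBoundary (petersen n k) F : ℝ) ≤ 10 * (A'.card : ℝ) := hb
    _ < 10 * (δ * I.card) := by
        have h10 : (0:ℝ) < 10 := by norm_num
        exact (mul_lt_mul_iff_right₀ h10).2 hA'card
    _ = ε * (2 * (I.card : ℝ)) := by rw [hδdef]; ring
    _ = ε * (F.card : ℝ) := by rw [hF2]
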